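/- For x in the interior of the second-order cone Qⁿ, define det(x) = x₀² − ‖x̄‖² and x⁻¹ = (1/det(x))·(x₀, −x̄). Then for μ > 0 and z = x − μx⁻¹, the unique minimizer over int(Qⁿ) of f(y) = (1/2)‖z − y‖² − (μ/2)log(det(y)) is x. -/

import Mathlib

set_option maxHeartbeats 1600000 in
/-- For x in the interior of the second-order cone (‖x̄‖ < x₀), with
det(x) = x₀² − ‖x̄‖², x⁻¹ = (1/det(x))·(x₀, −x̄), μ > 0 and z = x − μx⁻¹, the point x is
the unique minimizer over int(Qⁿ) of f(y) = (1/2)‖z − y‖² − (μ/2)·log(det(y)). -/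
theorem stmt5 {E : Type*} [NormedAddCommGroup E] [InnerProductSpace ℝ E]
    (x : ℝ × E) (hx : ‖x.2‖ < x.1) (μ : ℝ) (hμ : 0 < μ)
    (detx : ℝ) (hdetx : detx = x.1 ^ 2 - ‖x.2‖ ^ 2)
    (z : ℝ × E) (hz : z = (x.1 - μ * (x.1 / detx), x.2 - μ • ((detx)⁻¹ • (-x.2))))
    (S : Set (ℝ × E)) (hS : S = {y : ℝ × E | ‖y.2‖ < y.1})
    (f : ℝ × E → ℝ)
    (hf : ∀ y, f y = (1 / 2) * ((z.1 - y.1) ^ 2 + ‖z.2 - y.2‖ ^ 2)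
        - (μ / 2) * Real.log (y.1 ^ 2 - ‖y.2‖ ^ 2)) :
    IsMinOn f S x ∧ ∀ y ∈ S, IsMinOn f S y → y = x := by
  have ha : (0:ℝ) ≤ ‖x.2‖ := norm_nonneg _
  have hx1 : 0 < x.1 := lt_of_le_of_lt ha hx
  have hd : 0 < detx := by rw [hdetx]; nlinarith
  have key : ∀ y : ℝ × E, ‖y.2‖ < y.1 →
      f x + (1/2) * ((y.1 - x.1)^2 + ‖y.2 - x.2‖^2) ≤ f y := by
    intro y hy
    have hb : (0:ℝ) ≤ ‖y.2‖ := norm_nonneg _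
    have hy1 : 0 < y.1 := lt_of_le_of_lt hb hy
    have hdy : 0 < y.1 ^ 2 - ‖y.2‖ ^ 2 := by nlinarith
    set t : ℝ := x.1 * y.1 - inner ℝ x.2 y.2 with htdef
    have hinner : |(inner ℝ x.2 y.2 : ℝ)| ≤ ‖x.2‖ * ‖y.2‖ := abs_real_inner_le_norm _ _
    have hinner1 : (inner ℝ x.2 y.2 : ℝ) ≤ ‖x.2‖ * ‖y.2‖ := (abs_le.mp hinner).2
    have hinner2 : -(‖x.2‖ * ‖y.2‖) ≤ (inner ℝ x.2 y.2 : ℝ) := (abs_le.mp hinner).1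
    have ht : 0 < t := by
      have : ‖x.2‖ * ‖y.2‖ < x.1 * y.1 := by nlinarith
      simp only [htdef]; nlinarith
    -- determinant inequality
    have hdet2 : detx * (y.1 ^ 2 - ‖y.2‖ ^ 2) ≤ t ^ 2 := by
      rw [hdetx, htdef]
      have hab : ‖x.2‖ * ‖y.2‖ < x.1 * y.1 := by nlinarith
      have k1 : (0:ℝ) ≤ ‖x.2‖ * ‖y.2‖ - inner ℝ x.2 y.2 := by linarith
      have k2 : (0:ℝ) ≤ 2 * (x.1 * y.1) - ‖x.2‖ * ‖y.2‖ - inner ℝ x.2 y.2 := by linarith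
      nlinarith [sq_nonneg (x.1 * ‖y.2‖ - y.1 * ‖x.2‖), mul_nonneg k1 k2]
    -- log inequality
    have hlog : Real.log (y.1 ^ 2 - ‖y.2‖ ^ 2) - Real.log detx
        ≤ 2 * (t - detx) / detx := by
      have h1 : Real.log detx + Real.log (y.1 ^ 2 - ‖y.2‖ ^ 2) ≤ 2 * Real.log t := by
        have := Real.log_le_log (mul_pos hd hdy) hdet2
        rwa [Real.log_mul hd.ne' hdy.ne', Real.log_pow, Nat.cast_ofNat] at this
      have h2 : Real.log t - Real.log detx ≤ t / detx - 1 := by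
        have := Real.log_le_sub_one_of_pos (div_pos ht hd)
        rwa [Real.log_div ht.ne' hd.ne'] at this
      have h3 : t / detx - 1 = (t - detx) / detx := by field_simp
      have h4 : 2 * (t - detx) / detx = 2 * ((t - detx) / detx) := by ring
      linarith
    -- expansions
    have hz1 : z.1 = x.1 - μ * (x.1 / detx) := by rw [hz]
    have hz2 : z.2 = (1 + μ / detx) • x.2 := by
      rw [hz]; simp only [smul_neg, smul_smul, sub_neg_eq_add]
      rw [add_smul, one_smul]; ring_nf
    have e1 : ‖z.2 - y.2‖^2 = (1 + μ/detx)^2 * ‖x.2‖^2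
        - 2 * (1 + μ/detx) * (inner ℝ x.2 y.2 : ℝ) + ‖y.2‖^2 := by
      rw [hz2, norm_sub_sq_real, norm_smul, real_inner_smul_left]
      simp [abs_of_pos, mul_pow, sq_abs]
      ring
    have e2 : ‖z.2 - x.2‖^2 = (μ/detx)^2 * ‖x.2‖^2 := by
      rw [hz2]
      have : (1 + μ / detx) • x.2 - x.2 = (μ/detx) • x.2 := by module
      rw [this, norm_smul, Real.norm_eq_abs, mul_pow, sq_abs]
    have e3 : ‖y.2 - x.2‖^2 = ‖y.2‖^2 - 2 * (inner ℝ x.2 y.2 : ℝ) + ‖x.2‖^2 := by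
      rw [norm_sub_sq_real, real_inner_comm]
    -- quadratic identity
    have hquad : (1/2) * ((z.1 - y.1) ^ 2 + ‖z.2 - y.2‖ ^ 2)
        - (1/2) * ((z.1 - x.1) ^ 2 + ‖z.2 - x.2‖ ^ 2)
        - μ * (t - detx) / detx
        = (1/2) * ((y.1 - x.1)^2 + ‖y.2 - x.2‖^2) := by
      rw [e1, e2, e3, hz1, htdef]
      field_simp
      linear_combination (2 * μ * detx) * hdetx
    have hmul : (μ/2) * (Real.log (y.1 ^ 2 - ‖y.2‖ ^ 2) - Real.log detx)
        ≤ μ * (t - detx) / detx := by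
      have := mul_le_mul_of_nonneg_left hlog (le_of_lt (by linarith : (0:ℝ) < μ/2))
      calc (μ/2) * (Real.log (y.1 ^ 2 - ‖y.2‖ ^ 2) - Real.log detx)
          ≤ (μ/2) * (2 * (t - detx) / detx) := this
        _ = μ * (t - detx) / detx := by ring
    have hfx := hf x
    have hfy := hf y
    rw [← hdetx] at hfx
    linarith [hquad, hmul, hfx, hfy]
  constructor
  · rw [isMinOn_iff]
    intro y hy
    rw [hS] at hy
    have := key y hy
    linarith [sq_nonneg (y.1 - x.1), sq_nonneg ‖y.2 - x.2‖]
  · intro y hyS hmin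
    rw [hS] at hyS
    have hxS : x ∈ S := by rw [hS]; exact hx
    have h1 : f y ≤ f x := (isMinOn_iff.mp hmin) x hxS
    have h2 := key y hyS
    have h3 : (y.1 - x.1)^2 + ‖y.2 - x.2‖^2 ≤ 0 := by linarith
    have h4' : (y.1 - x.1)^2 = 0 :=
      le_antisymm (by linarith [sq_nonneg ‖y.2 - x.2‖]) (sq_nonneg _)
    have h5' : ‖y.2 - x.2‖^2 = 0 :=
      le_antisymm (by linarith [sq_nonneg (y.1 - x.1)]) (sq_nonneg _)
    have h4 : y.1 = x.1 := by
      have := sq_eq_zero_iff.mp h4'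
      linarith
    have h5 : ‖y.2 - x.2‖ = 0 := sq_eq_zero_iff.mp h5'
    have h6 : y.2 = x.2 := by rwa [norm_eq_zero, sub_eq_zero] at h5
    exact Prod.ext h4 h6
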